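/- Let X be a nonempty subset of a complete metric space (Y,d), let F be a multivalued mapping from X to Y whose graph {(x,t) : x ∈ X, t ∈ F(x)} is closed in Y × Y, and let δ be a metric on X ∪ F(X) that is uniformly equivalent to d (the identity between (X ∪ F(X), δ) and (X ∪ F(X), d) is uniformly continuous in both directions). Assume there exists k > 0 such that for each x ∈ X with x ∉ F(x) and each t ∈ F(x) there exist z ∈ X with z ≠ x and v ∈ F(z) satisfying δ(x,z) ≤ d(x,t) − d(z,v) and δ(t,v) ≤ k (d(x,t) − d(z,v)). Then F has a fixed point. -/
import Mathlib


open Metric Filter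

/-- **Theorem 3.8.** Let `X` be a nonempty subset of a complete metric space `(Y,d)`,
`F` a multivalued mapping from `X` to `Y` (nonempty values) with closed graph, and `δ` a
metric on `S = X ∪ F(X)` uniformly equivalent to `d`. If there is `k > 0` such that for
each `x ∈ X` with `x ∉ F(x)` and each `t ∈ F(x)` there are `z ∈ X`, `z ≠ x`, and
`v ∈ F(z)` with `δ(x,z) ≤ d(x,t) − d(z,v)` and `δ(t,v) ≤ k·(d(x,t) − d(z,v))`, then `F`
has a fixed point. -/
theorem fixed_point_of_two_metric_tool
    {Y : Type*} [MetricSpace Y] [CompleteSpace Y]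
    (X : Set Y) (hX : X.Nonempty)
    (F : X → Set Y) (hFne : ∀ x, (F x).Nonempty)
    (hgraph : IsClosed {p : Y × Y | ∃ x : X, ∃ t ∈ F x, p = ((x : Y), t)})
    (S : Set Y) (hS : S = X ∪ ⋃ x : X, F x)
    (δ : Y → Y → ℝ)
    (hδ_eq_zero : ∀ a ∈ S, ∀ b ∈ S, (δ a b = 0 ↔ a = b))
    (hδ_symm : ∀ a ∈ S, ∀ b ∈ S, δ a b = δ b a)
    (hδ_tri : ∀ a ∈ S, ∀ b ∈ S, ∀ c ∈ S, δ a c ≤ δ a b + δ b c)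
    (hδ_nonneg : ∀ a ∈ S, ∀ b ∈ S, 0 ≤ δ a b)
    (hequiv₁ : ∀ ε : ℝ, 0 < ε → ∃ η : ℝ, 0 < η ∧
      ∀ a ∈ S, ∀ b ∈ S, dist a b < η → δ a b < ε)
    (hequiv₂ : ∀ ε : ℝ, 0 < ε → ∃ η : ℝ, 0 < η ∧
      ∀ a ∈ S, ∀ b ∈ S, δ a b < η → dist a b < ε)
    (k : ℝ) (hk : 0 < k)
    (hcond : ∀ x : X, (x : Y) ∉ F x → ∀ t ∈ F x, ∃ z : X, z ≠ x ∧ ∃ v ∈ F z,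
      δ (x : Y) (z : Y) ≤ dist (x : Y) t - dist (z : Y) v ∧
      δ t v ≤ k * (dist (x : Y) t - dist (z : Y) v)) :
    ∃ x : X, (x : Y) ∈ F x := by
  by_contra hfix
  push_neg at hfix
  -- basic membership facts
  have hXS : ∀ x : X, (x : Y) ∈ S := fun x => by rw [hS]; exact Or.inl x.2
  have hFS : ∀ (x : X), ∀ t ∈ F x, t ∈ S := fun x t ht => by
    rw [hS]; exact Or.inr (Set.mem_iUnion.2 ⟨x, ht⟩)
  have hδself : ∀ a ∈ S, δ a a = 0 := fun a ha => (hδ_eq_zero a ha a ha).2 rfl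
  -- the type of admissible pairs
  let Pt := {p : X × Y // p.2 ∈ F p.1}
  let D : Pt → ℝ := fun p => dist (p.1.1 : Y) p.1.2
  let R : Pt → Pt → Prop := fun p q =>
    δ (p.1.1 : Y) (q.1.1 : Y) ≤ D p - D q ∧ δ p.1.2 q.1.2 ≤ k * (D p - D q)
  have hm1 : ∀ p : Pt, ((p.1.1 : X) : Y) ∈ S := fun p => hXS p.1.1
  have hm2 : ∀ p : Pt, p.1.2 ∈ S := fun p => hFS p.1.1 p.1.2 p.2
  have hDnn : ∀ p : Pt, 0 ≤ D p := fun p => dist_nonneg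
  have hRrefl : ∀ p : Pt, R p p := by
    intro p
    constructor
    · rw [hδself _ (hm1 p)]; simp
    · rw [hδself _ (hm2 p)]; simp
  have hRtrans : ∀ p q r : Pt, R p q → R q r → R p r := by
    rintro p q r ⟨h1, h2⟩ ⟨h3, h4⟩
    constructor
    · calc δ (p.1.1 : Y) (r.1.1 : Y)
          ≤ δ (p.1.1 : Y) (q.1.1 : Y) + δ (q.1.1 : Y) (r.1.1 : Y) :=
            hδ_tri _ (hm1 p) _ (hm1 q) _ (hm1 r)
        _ ≤ (D p - D q) + (D q - D r) := add_le_add h1 h3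
        _ = D p - D r := by ring
    · calc δ p.1.2 r.1.2 ≤ δ p.1.2 q.1.2 + δ q.1.2 r.1.2 :=
            hδ_tri _ (hm2 p) _ (hm2 q) _ (hm2 r)
        _ ≤ k * (D p - D q) + k * (D q - D r) := add_le_add h2 h4
        _ = k * (D p - D r) := by ring
  have hRD : ∀ p q : Pt, R p q → D q ≤ D p := by
    intro p q h
    have h0 : 0 ≤ δ (p.1.1 : Y) (q.1.1 : Y) := hδ_nonneg _ (hm1 p) _ (hm1 q)
    linarith [h.1]
  have hbddA : ∀ p : Pt, BddBelow (D '' {q | R p q}) := by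
    intro p
    refine ⟨0, ?_⟩
    rintro a ⟨q, -, rfl⟩
    exact hDnn q
  -- near-optimal successor choice
  have hstep : ∀ (n : ℕ) (p : Pt), ∃ q : Pt,
      R p q ∧ D q < sInf (D '' {q | R p q}) + (1 / 2) ^ n := by
    intro n p
    have hne : (D '' {q | R p q}).Nonempty := ⟨D p, p, hRrefl p, rfl⟩
    have hpos : (0 : ℝ) < (1 / 2) ^ n := by positivity
    obtain ⟨a, ⟨q, hq, rfl⟩, ha⟩ := Real.lt_sInf_add_pos hne hpos
    exact ⟨q, hq, ha⟩
  choose f hf1 hf2 using hstep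
  -- the iterated sequence
  obtain ⟨x₀, hx₀⟩ := hX
  obtain ⟨t₀, ht₀⟩ := hFne ⟨x₀, hx₀⟩
  let u : ℕ → Pt := fun n => Nat.rec ⟨(⟨x₀, hx₀⟩, t₀), ht₀⟩ (fun n q => f n q) n
  have hRu : ∀ n, R (u n) (u (n + 1)) := fun n => hf1 n (u n)
  have huD : ∀ n, D (u (n + 1)) < sInf (D '' {q | R (u n) q}) + (1 / 2) ^ n :=
    fun n => hf2 n (u n)
  have hRchain : ∀ n m : ℕ, n ≤ m → R (u n) (u m) := by
    intro n m h
    induction h with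
    | refl => exact hRrefl _
    | step h ih => exact hRtrans _ _ _ ih (hRu _)
  have hDanti : Antitone fun n => D (u n) := fun n m h => hRD _ _ (hRchain n m h)
  have hbdd : BddBelow (Set.range fun n => D (u n)) := by
    refine ⟨0, ?_⟩; rintro a ⟨n, rfl⟩; exact hDnn _
  set c := ⨅ n, D (u n) with hc_def
  have hc : Tendsto (fun n => D (u n)) atTop (nhds c) := tendsto_atTop_ciInf hDanti hbdd
  have hcle : ∀ n, c ≤ D (u n) := fun n => ciInf_le hbdd n
  -- general Cauchy criterion
  have key : ∀ K : ℝ, 0 < K → ∀ w : ℕ → Y, (∀ n, w n ∈ S) →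
      (∀ n m : ℕ, n ≤ m → δ (w n) (w m) ≤ K * (D (u n) - D (u m))) → CauchySeq w := by
    intro K hK w hwS hw
    rw [Metric.cauchySeq_iff']
    intro ε hε
    obtain ⟨η, hη, hη2⟩ := hequiv₂ ε hε
    have hev : ∀ᶠ n in atTop, D (u n) < c + η / K :=
      hc.eventually (gt_mem_nhds (lt_add_of_pos_right c (by positivity)))
    obtain ⟨N, hN⟩ := eventually_atTop.1 hev
    refine ⟨N, fun n hn => ?_⟩
    have h1 : δ (w N) (w n) ≤ K * (D (u N) - D (u n)) := hw N n hn
    have h2 : D (u n) ≥ c := hcle n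
    have h3 : D (u N) < c + η / K := hN N le_rfl
    have h4 : δ (w N) (w n) < η := by
      have : K * (D (u N) - D (u n)) < K * (η / K) := by
        apply mul_lt_mul_of_pos_left _ hK
        linarith
      rw [mul_div_cancel₀ _ (ne_of_gt hK)] at this
      linarith
    have := hη2 _ (hwS N) _ (hwS n) h4
    rwa [dist_comm] at this
  have hone : (1 : ℝ) ≤ max 1 k := le_max_left 1 k
  have hKpos : (0 : ℝ) < max 1 k := lt_of_lt_of_le one_pos hone
  have hkK : k ≤ max 1 k := le_max_right 1 k
  have hCx : CauchySeq fun n => ((u n).1.1 : Y) := by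
    refine key (max 1 k) hKpos _ (fun n => hm1 (u n)) ?_
    intro n m h
    have h1 := (hRchain n m h).1
    have h2 : D (u m) ≤ D (u n) := hDanti h
    nlinarith
  have hCt : CauchySeq fun n => (u n).1.2 := by
    refine key (max 1 k) hKpos _ (fun n => hm2 (u n)) ?_
    intro n m h
    have h1 := (hRchain n m h).2
    have h2 : D (u m) ≤ D (u n) := hDanti h
    nlinarith
  obtain ⟨xe, hxe⟩ := cauchySeq_tendsto_of_complete hCx
  obtain ⟨te, hte⟩ := cauchySeq_tendsto_of_complete hCt
  -- the limit pair is in the graph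
  have hpair : Tendsto (fun n => (((u n).1.1 : Y), (u n).1.2)) atTop (nhds (xe, te)) :=
    hxe.prodMk_nhds hte
  have hmemG : (xe, te) ∈ {p : Y × Y | ∃ x : X, ∃ t ∈ F x, p = ((x : Y), t)} :=
    hgraph.mem_of_tendsto hpair
      (Eventually.of_forall fun n => ⟨(u n).1.1, (u n).1.2, (u n).2, rfl⟩)
  obtain ⟨ξ, t', ht', hpe⟩ := hmemG
  have hxeξ : xe = (ξ : Y) := congrArg Prod.fst hpe
  have hteq : te = t' := congrArg Prod.snd hpe
  have hteF : te ∈ F ξ := by rw [hteq]; exact ht'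
  have hxeS : xe ∈ S := by rw [hxeξ]; exact hXS ξ
  have hteS : te ∈ S := hFS ξ te hteF
  -- the value at the limit is c
  have hdist : Tendsto (fun n => D (u n)) atTop (nhds (dist xe te)) := hxe.dist hte
  have hceq : dist xe te = c := tendsto_nhds_unique hdist hc
  -- δ-estimates to the limit
  have hδlimx : ∀ n, δ ((u n).1.1 : Y) xe ≤ D (u n) - c := by
    intro n
    apply _root_.le_of_forall_pos_le_add
    intro ε hε
    obtain ⟨η, hη, hη1⟩ := hequiv₁ ε hε
    have hev : ∀ᶠ m in atTop, dist ((u m).1.1 : Y) xe < η ∧ n ≤ m := by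
      filter_upwards [hxe.eventually (Metric.ball_mem_nhds xe hη), eventually_ge_atTop n]
        with m h1 h2
      exact ⟨by simpa [Metric.mem_ball] using h1, h2⟩
    obtain ⟨m, hmd, hmn⟩ := hev.exists
    have h1 := (hRchain n m hmn).1
    have h2 : δ ((u m).1.1 : Y) xe < ε := hη1 _ (hm1 (u m)) _ hxeS hmd
    have h3 : δ ((u n).1.1 : Y) xe ≤ δ ((u n).1.1 : Y) ((u m).1.1 : Y) + δ ((u m).1.1 : Y) xe :=
      hδ_tri _ (hm1 (u n)) _ (hm1 (u m)) _ hxeS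
    have h4 : c ≤ D (u m) := hcle m
    linarith
  have hδlimt : ∀ n, δ (u n).1.2 te ≤ k * (D (u n) - c) := by
    intro n
    apply _root_.le_of_forall_pos_le_add
    intro ε hε
    obtain ⟨η, hη, hη1⟩ := hequiv₁ ε hε
    have hev : ∀ᶠ m in atTop, dist ((u m).1.2) te < η ∧ n ≤ m := by
      filter_upwards [hte.eventually (Metric.ball_mem_nhds te hη), eventually_ge_atTop n]
        with m h1 h2
      exact ⟨by simpa [Metric.mem_ball] using h1, h2⟩
    obtain ⟨m, hmd, hmn⟩ := hev.exists
    have h1 := (hRchain n m hmn).2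
    have h2 : δ ((u m).1.2) te < ε := hη1 _ (hm2 (u m)) _ hteS hmd
    have h3 : δ (u n).1.2 te ≤ δ (u n).1.2 (u m).1.2 + δ (u m).1.2 te :=
      hδ_tri _ (hm2 (u n)) _ (hm2 (u m)) _ hteS
    have h4 : c ≤ D (u m) := hcle m
    nlinarith
  -- apply the contraction condition at the limit
  obtain ⟨z, hzne, v, hv, h1, h2⟩ := hcond ξ (hfix ξ) te hteF
  have hcc : dist (ξ : Y) te = c := by rw [← hxeξ]; exact hceq
  rw [hcc] at h1 h2
  have hq : Pt := ⟨(z, v), hv⟩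
  have hzS : (z : Y) ∈ S := hXS z
  have hvS : v ∈ S := hFS z v hv
  -- d(z,v) < c
  have hδzpos : 0 < δ (ξ : Y) (z : Y) := by
    rcases lt_or_eq_of_le (hδ_nonneg _ (hXS ξ) _ hzS) with h | h
    · exact h
    · exfalso
      exact hzne (Subtype.ext ((hδ_eq_zero _ (hXS ξ) _ hzS).1 h.symm).symm)
  have hdzv : dist (z : Y) v < c := by linarith
  -- (z,v) is an admissible successor of every u n
  have hRq : ∀ n, R (u n) ⟨(z, v), hv⟩ := by
    intro n
    constructor
    · have h3 : δ ((u n).1.1 : Y) (z : Y) ≤ δ ((u n).1.1 : Y) xe + δ xe (z : Y) :=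
        hδ_tri _ (hm1 (u n)) _ hxeS _ hzS
      have h5 : δ xe (z : Y) = δ (ξ : Y) (z : Y) := by rw [hxeξ]
      have := hδlimx n
      show δ ((u n).1.1 : Y) (z : Y) ≤ D (u n) - dist (z : Y) v
      linarith
    · have h3 : δ (u n).1.2 v ≤ δ (u n).1.2 te + δ te v :=
        hδ_tri _ (hm2 (u n)) _ hteS _ hvS
      have := hδlimt n
      show δ (u n).1.2 v ≤ k * (D (u n) - dist (z : Y) v)
      nlinarith
  -- hence d(z,v) ≥ c, a contradiction
  have hge : c ≤ dist (z : Y) v := by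
    apply _root_.le_of_forall_pos_le_add
    intro ε hε
    obtain ⟨n, hn⟩ := exists_pow_lt_of_lt_one hε (by norm_num : (1 : ℝ) / 2 < 1)
    have h3 : sInf (D '' {q | R (u n) q}) ≤ dist (z : Y) v :=
      csInf_le (hbddA (u n)) ⟨⟨(z, v), hv⟩, hRq n, rfl⟩
    have h4 := huD n
    have h5 := hcle (n + 1)
    linarith
  linarith
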